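/- Let d ≥ 2 be an integer and p ∈ (0,1) with pd an integer. For every d-dimensional exchangeable Bernoulli vector X with marginal parameter p, the second-order cross moment μ_2 = E[X_i X_j] (i ≠ j) satisfies p(pd−1)/(d−1) ≤ μ_2 ≤ p. Moreover, both bounds are attained: the lower bound by the vector whose number of defaults is almost surely pd, and the upper bound by the vector whose number of defaults equals 0 with probability 1−p and d with probability p. -/

import Mathlib

open Finset

/-- A joint pmf on `{0,1}^d` which is exchangeable with Bernoulli(p) margins. -/
def IsExchBernoulli (d : ℕ) (p : ℝ) (f : (Fin d → Bool) → ℝ) : Prop :=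
  (∀ x, 0 ≤ f x) ∧ (∑ x, f x = 1) ∧
  (∀ σ : Equiv.Perm (Fin d), ∀ x, f (x ∘ σ) = f x) ∧
  (∀ i : Fin d, ∑ x ∈ Finset.univ.filter (fun x : Fin d → Bool => x i = true), f x = p)

/-- The second-order cross moment `E[X_i X_j]` of the joint pmf `f`. -/
def crossMoment (d : ℕ) (f : (Fin d → Bool) → ℝ) (i j : Fin d) : ℝ :=
  ∑ x ∈ Finset.univ.filter (fun x : Fin d → Bool => x i = true ∧ x j = true), f x

/-- Probability that the number of defaults equals `k` under the joint pmf `f`. -/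
def probDefaults (d : ℕ) (f : (Fin d → Bool) → ℝ) (k : ℕ) : ℝ :=
  ∑ x ∈ Finset.univ.filter
    (fun x : Fin d → Bool => (Finset.univ.filter (fun l => x l = true)).card = k), f x

/-! ### Auxiliary lemmas -/

/-- number of trues -/
def myN (d : ℕ) (x : Fin d → Bool) : ℕ := (univ.filter fun l => x l = true).card

lemma myN_comp {d : ℕ} (σ : Equiv.Perm (Fin d)) (x : Fin d → Bool) : myN d (x ∘ σ) = myN d x := by
  unfold myN
  rw [show (univ.filter fun l => x l = true)
      = (univ.filter fun l => (x ∘ σ) l = true).map σ.toEmbedding by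
    ext m; simp [Equiv.exists_congr_left (p := fun l => x l = true)], card_map]

lemma cast_sq_sub (a : ℕ) : ((a * a - a : ℕ) : ℝ) = (a : ℝ) * a - a := by
  rcases Nat.eq_zero_or_pos a with h | h
  · simp [h]
  · rw [Nat.cast_sub (Nat.le_mul_of_pos_left a h)]; push_cast; ring

lemma sum_margins {d : ℕ} (f : (Fin d → Bool) → ℝ) :
    ∑ i : Fin d, ∑ x ∈ univ.filter (fun x : Fin d → Bool => x i = true), f x
      = ∑ x : Fin d → Bool, f x * (myN d x : ℝ) := by
  simp only [sum_filter]
  rw [Finset.sum_comm]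
  refine Finset.sum_congr rfl fun x _ => ?_
  calc (∑ i : Fin d, if x i = true then f x else 0)
      = ∑ i : Fin d, f x * (if x i = true then 1 else 0) := by
        refine Finset.sum_congr rfl fun i _ => by split <;> simp
    _ = f x * (myN d x : ℝ) := by
        rw [← Finset.mul_sum, Finset.sum_boole]; rfl

lemma sum_cross {d : ℕ} (f : (Fin d → Bool) → ℝ) :
    ∑ q ∈ (univ : Finset (Fin d)).offDiag,
        (∑ x ∈ univ.filter (fun x : Fin d → Bool => x q.1 = true ∧ x q.2 = true), f x)
      = ∑ x : Fin d → Bool, f x * ((myN d x * myN d x - myN d x : ℕ) : ℝ) := by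
  simp only [sum_filter]
  rw [Finset.sum_comm]
  refine Finset.sum_congr rfl fun x _ => ?_
  calc (∑ q ∈ (univ : Finset (Fin d)).offDiag, if x q.1 = true ∧ x q.2 = true then f x else 0)
      = ∑ q ∈ (univ : Finset (Fin d)).offDiag,
          f x * (if x q.1 = true ∧ x q.2 = true then 1 else 0) := by
        refine Finset.sum_congr rfl fun q _ => by split <;> simp
    _ = f x * ((myN d x * myN d x - myN d x : ℕ) : ℝ) := by
        rw [← Finset.mul_sum, Finset.sum_boole]
        congr 1
        rw [show ((univ : Finset (Fin d)).offDiag.filter fun q => x q.1 = true ∧ x q.2 = true)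
            = (univ.filter fun l => x l = true).offDiag by
          ext q; simp [Finset.mem_offDiag, and_comm, and_left_comm, and_assoc]]
        rw [Finset.offDiag_card]
        rfl

lemma margin_perm {d : ℕ} (f : (Fin d → Bool) → ℝ)
    (hf : ∀ σ : Equiv.Perm (Fin d), ∀ x, f (x ∘ σ) = f x) (i j : Fin d) :
    ∑ x ∈ univ.filter (fun x : Fin d → Bool => x i = true), f x
      = ∑ x ∈ univ.filter (fun x : Fin d → Bool => x j = true), f x := by
  set σ := Equiv.swap i j with hσ
  refine Finset.sum_nbij' (fun x => x ∘ σ) (fun x => x ∘ σ) ?_ ?_ ?_ ?_ ?_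
  · intro x hx; simp only [mem_filter, mem_univ, true_and] at hx ⊢
    simpa [σ, Equiv.swap_apply_right] using hx
  · intro x hx; simp only [mem_filter, mem_univ, true_and] at hx ⊢
    simpa [σ, Equiv.swap_apply_left] using hx
  · intro x _; funext l; simp [σ, Function.comp]
  · intro x _; funext l; simp [σ, Function.comp]
  · intro x _; exact (hf σ x).symm

lemma cross_perm {d : ℕ} (f : (Fin d → Bool) → ℝ)
    (hf : ∀ σ : Equiv.Perm (Fin d), ∀ x, f (x ∘ σ) = f x)
    (σ : Equiv.Perm (Fin d)) (i j : Fin d) :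
    ∑ x ∈ univ.filter (fun x : Fin d → Bool => x (σ i) = true ∧ x (σ j) = true), f x
      = ∑ x ∈ univ.filter (fun x : Fin d → Bool => x i = true ∧ x j = true), f x := by
  refine Finset.sum_nbij' (fun x => x ∘ σ) (fun x => x ∘ σ.symm) ?_ ?_ ?_ ?_ ?_
  · intro x hx; simp only [mem_filter, mem_univ, true_and] at hx ⊢
    exact hx
  · intro x hx; simp only [mem_filter, mem_univ, true_and] at hx ⊢
    simpa using hx
  · intro x _; funext l; simp
  · intro x _; funext l; simp
  · intro x _; exact (hf σ x).symm

lemma exists_perm_pair {d : ℕ} (i j i' j' : Fin d) (hij : i ≠ j) (hij' : i' ≠ j') :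
    ∃ σ : Equiv.Perm (Fin d), σ i = i' ∧ σ j = j' := by
  classical
  set σ1 := Equiv.swap i i' with hσ1
  set j1 := σ1 j with hj1
  have h1 : σ1 i = i' := Equiv.swap_apply_left i i'
  have hj1i' : j1 ≠ i' := by
    rw [hj1, ← h1]; exact fun h => hij (σ1.injective h).symm
  set σ2 := Equiv.swap j1 j' with hσ2
  refine ⟨σ2 * σ1, ?_, ?_⟩
  · simp only [Equiv.Perm.mul_apply, h1]
    exact Equiv.swap_apply_of_ne_of_ne hj1i'.symm hij'
  · simp only [Equiv.Perm.mul_apply, ← hj1]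
    exact Equiv.swap_apply_left j1 j'

/-- key identity: `E[N(N-1)] = d(d-1) · μ₂` for any pair `i ≠ j`. -/
lemma cross_val {d : ℕ} (f : (Fin d → Bool) → ℝ)
    (hf : ∀ σ : Equiv.Perm (Fin d), ∀ x, f (x ∘ σ) = f x) (i j : Fin d) (hij : i ≠ j) :
    ∑ x : Fin d → Bool, f x * ((myN d x * myN d x - myN d x : ℕ) : ℝ)
      = ((d * d - d : ℕ) : ℝ) * crossMoment d f i j := by
  rw [← sum_cross]
  have hterm : ∀ q ∈ (univ : Finset (Fin d)).offDiag,
      (∑ x ∈ univ.filter (fun x : Fin d → Bool => x q.1 = true ∧ x q.2 = true), f x)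
        = crossMoment d f i j := by
    intro q hq
    rw [Finset.mem_offDiag] at hq
    obtain ⟨σ, hσ1, hσ2⟩ := exists_perm_pair i j q.1 q.2 hij hq.2.2
    rw [← hσ1, ← hσ2]
    exact cross_perm f hf σ i j
  rw [Finset.sum_congr rfl hterm, Finset.sum_const, Finset.offDiag_card, card_univ,
    Fintype.card_fin, nsmul_eq_mul]

theorem stmt_8 (d : ℕ) (hd : 2 ≤ d) (p : ℝ) (hp : p ∈ Set.Ioo (0 : ℝ) 1)
    (k : ℕ) (hk : (k : ℝ) = p * d) :
    (∀ f : (Fin d → Bool) → ℝ, IsExchBernoulli d p f →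
      ∀ i j : Fin d, i ≠ j →
        p * (p * d - 1) / ((d : ℝ) - 1) ≤ crossMoment d f i j ∧ crossMoment d f i j ≤ p) ∧
    (∃ f : (Fin d → Bool) → ℝ, IsExchBernoulli d p f ∧
      probDefaults d f k = 1 ∧
      ∀ i j : Fin d, i ≠ j → crossMoment d f i j = p * (p * d - 1) / ((d : ℝ) - 1)) ∧
    (∃ f : (Fin d → Bool) → ℝ, IsExchBernoulli d p f ∧
      probDefaults d f 0 = 1 - p ∧ probDefaults d f d = p ∧
      ∀ i j : Fin d, i ≠ j → crossMoment d f i j = p) := by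
  obtain ⟨hp0, hp1⟩ := hp
  have hd0 : (0 : ℝ) < d := by positivity
  have hd2 : (2 : ℝ) ≤ (d : ℝ) := by exact_mod_cast hd
  have hd1 : (1 : ℝ) < (d : ℝ) := by linarith
  have hdd : (0 : ℝ) < (d : ℝ) * d - d := by nlinarith
  have hcastdd : ((d * d - d : ℕ) : ℝ) = (d : ℝ) * d - d := cast_sq_sub d
  refine ⟨?_, ?_, ?_⟩
  · -- general bounds
    rintro f ⟨h0, h1, h3, h4⟩ i j hij
    have hE1 : ∑ x : Fin d → Bool, f x * (myN d x : ℝ) = p * d := by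
      rw [← sum_margins]
      simp only [h4]
      rw [Finset.sum_const, card_univ, Fintype.card_fin, nsmul_eq_mul]; ring
    have hkey := cross_val f h3 i j hij
    have hCS : (p * d) * (p * d) ≤ ∑ x : Fin d → Bool, f x * (myN d x : ℝ) * (myN d x : ℝ) := by
      have := Finset.sum_sq_le_sum_mul_sum_of_sq_eq_mul (univ : Finset (Fin d → Bool))
        (r := fun x => f x * (myN d x : ℝ)) (f := fun x => f x)
        (g := fun x => f x * (myN d x : ℝ) * (myN d x : ℝ))
        (fun x _ => h0 x)
        (fun x _ => mul_nonneg (mul_nonneg (h0 x) (Nat.cast_nonneg _)) (Nat.cast_nonneg _))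
        (fun x _ => by ring)
      rw [h1, one_mul] at this
      calc (p * d) * (p * d) = (∑ x : Fin d → Bool, f x * (myN d x : ℝ)) ^ 2 := by
            rw [hE1]; ring
        _ ≤ _ := this
    have hE2 : ∑ x : Fin d → Bool, f x * ((myN d x * myN d x - myN d x : ℕ) : ℝ)
        = (∑ x : Fin d → Bool, f x * (myN d x : ℝ) * (myN d x : ℝ)) - p * d := by
      rw [← hE1, ← Finset.sum_sub_distrib]
      refine Finset.sum_congr rfl fun x _ => ?_
      rw [cast_sq_sub]; ring
    constructor
    · -- lower bound
      have hlow : p * d * (p * d) - p * d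
          ≤ ((d : ℝ) * d - d) * crossMoment d f i j := by
        rw [← hcastdd, ← hkey, hE2]; linarith
      rw [div_le_iff₀ (by linarith : (0:ℝ) < (d:ℝ) - 1)]
      nlinarith [hlow]
    · -- upper bound
      calc crossMoment d f i j
          ≤ ∑ x ∈ univ.filter (fun x : Fin d → Bool => x i = true), f x := by
            refine Finset.sum_le_sum_of_subset_of_nonneg ?_ (fun x _ _ => h0 x)
            intro x hx; simp only [mem_filter, mem_univ, true_and] at hx ⊢; exact hx.1
        _ = p := h4 i
  · -- lower extremal: uniform on {N = k}
    have hkd : k < d := by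
      by_contra h
      push_neg at h
      have : (d : ℝ) ≤ (k : ℝ) := by exact_mod_cast h
      nlinarith
    have hchoose : 0 < d.choose k := Nat.choose_pos hkd.le
    have hchooseR : (0 : ℝ) < (d.choose k : ℝ) := by exact_mod_cast hchoose
    set f : (Fin d → Bool) → ℝ := fun x => if myN d x = k then ((d.choose k : ℝ))⁻¹ else 0 with hf
    have hcard : (univ.filter fun x : Fin d → Bool => myN d x = k).card = d.choose k := by
      have hb : (univ.filter fun x : Fin d → Bool => myN d x = k).card
          = ((univ : Finset (Fin d)).powersetCard k).card := by
        refine Finset.card_bij' (fun x _ => univ.filter fun l => x l = true)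
          (fun A _ => fun l => decide (l ∈ A)) ?_ ?_ ?_ ?_
        · intro x hx
          simp only [mem_filter, mem_univ, true_and] at hx
          simp only [Finset.mem_powersetCard]
          exact ⟨Finset.subset_univ _, hx⟩
        · intro A hA
          simp only [Finset.mem_powersetCard] at hA
          simp only [mem_filter, mem_univ, true_and]
          unfold myN
          rw [show (univ.filter fun l => decide (l ∈ A) = true) = A by ext l; simp]
          exact hA.2
        · intro x hx; funext l; simp
        · intro A hA; ext l; simp
      rw [hb, Finset.card_powersetCard, card_univ, Fintype.card_fin]
    have hsum : ∑ x : Fin d → Bool, f x = 1 := by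
      rw [hf]
      rw [← Finset.sum_filter]
      rw [Finset.sum_const, hcard, nsmul_eq_mul]
      field_simp
    have hnn : ∀ x, 0 ≤ f x := by
      intro x; rw [hf]; dsimp only; split
      · positivity
      · exact le_refl 0
    have hperm : ∀ σ : Equiv.Perm (Fin d), ∀ x, f (x ∘ σ) = f x := by
      intro σ x; rw [hf]; dsimp only; rw [myN_comp]
    have hfN : ∀ x, f x * (myN d x : ℝ) = (k : ℝ) * f x := by
      intro x; rw [hf]; dsimp only; split
      · rename_i h; rw [h]; ring
      · ring
    have hE1 : ∑ x : Fin d → Bool, f x * (myN d x : ℝ) = k := by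
      calc ∑ x : Fin d → Bool, f x * (myN d x : ℝ) = ∑ x : Fin d → Bool, (k : ℝ) * f x :=
            Finset.sum_congr rfl fun x _ => hfN x
        _ = (k : ℝ) := by rw [← Finset.mul_sum, hsum, mul_one]
    have hmargin : ∀ i : Fin d, ∑ x ∈ univ.filter (fun x : Fin d → Bool => x i = true), f x = p := by
      intro i
      have hall : ∀ j : Fin d,
          (∑ x ∈ univ.filter (fun x : Fin d → Bool => x j = true), f x)
            = ∑ x ∈ univ.filter (fun x : Fin d → Bool => x i = true), f x :=
        fun j => margin_perm f hperm j i
      have := sum_margins f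
      rw [Finset.sum_congr rfl (fun j _ => hall j), Finset.sum_const, card_univ,
        Fintype.card_fin, nsmul_eq_mul, hE1, hk] at this
      have hdne : (d : ℝ) ≠ 0 := by positivity
      exact mul_left_cancel₀ hdne (this.trans (mul_comm p (d : ℝ)))
    have hexch : IsExchBernoulli d p f := ⟨hnn, hsum, hperm, hmargin⟩
    refine ⟨f, hexch, ?_, ?_⟩
    · -- probDefaults k = 1
      rw [probDefaults, ← hsum]
      rw [Finset.sum_filter]
      refine Finset.sum_congr rfl fun x _ => ?_
      show (if myN d x = k then f x else 0) = f x
      rcases eq_or_ne (myN d x) k with h | h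
      · rw [if_pos h]
      · rw [if_neg h, hf]; dsimp only; rw [if_neg h]
    · intro i j hij
      have hfN2 : ∀ x, f x * ((myN d x * myN d x - myN d x : ℕ) : ℝ)
          = ((k * k - k : ℕ) : ℝ) * f x := by
        intro x; rw [hf]; dsimp only; split
        · rename_i h; rw [h]; ring
        · ring
      have hE2 : ∑ x : Fin d → Bool, f x * ((myN d x * myN d x - myN d x : ℕ) : ℝ)
          = ((k * k - k : ℕ) : ℝ) := by
        rw [Finset.sum_congr rfl fun x _ => hfN2 x, ← Finset.mul_sum, hsum, mul_one]
      have hkey := cross_val f hperm i j hij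
      rw [hE2, hcastdd, cast_sq_sub] at hkey
      have h1 : crossMoment d f i j = ((k:ℝ) * k - k) / ((d:ℝ) * d - d) := by
        rw [eq_div_iff hdd.ne']
        linarith [hkey]
      rw [h1, hk, div_eq_div_iff (by linarith) (by linarith : (0:ℝ) < (d:ℝ) - 1).ne']
      ring
  · -- upper extremal
    set T : Fin d → Bool := fun _ => true with hT
    set B : Fin d → Bool := fun _ => false with hB
    have hTB : T ≠ B := by
      intro h
      have := congrFun h ⟨0, by omega⟩
      simp [hT, hB] at this
    set f : (Fin d → Bool) → ℝ := fun x => if x = T then p else if x = B then 1 - p else 0 with hf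
    have hfT : f T = p := by rw [hf]; simp
    have hfB : f B = 1 - p := by rw [hf]; simp [hTB.symm]
    have hfo : ∀ x, x ≠ T → x ≠ B → f x = 0 := by
      intro x h1 h2; rw [hf]; simp [h1, h2]
    have hnn : ∀ x, 0 ≤ f x := by
      intro x; rw [hf]; dsimp only
      split
      · linarith
      · split
        · linarith
        · exact le_refl 0
    have hsum : ∑ x : Fin d → Bool, f x = 1 := by
      rw [← Finset.add_sum_erase _ f (Finset.mem_univ T),
        ← Finset.add_sum_erase _ f (Finset.mem_erase.mpr ⟨hTB.symm, Finset.mem_univ B⟩)]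
      rw [Finset.sum_eq_zero, hfT, hfB]
      · ring
      · intro x hx
        simp only [Finset.mem_erase] at hx
        exact hfo x hx.2.1 hx.1
    have hconst : ∀ (x : Fin d → Bool) (σ : Equiv.Perm (Fin d)) (c : Bool),
        (x ∘ σ = fun _ => c) ↔ (x = fun _ => c) := by
      intro x σ c
      constructor <;> intro h <;> funext l
      · have := congrFun h (σ.symm l); simpa using this
      · have := congrFun h (σ l); simpa using this
    have hperm : ∀ σ : Equiv.Perm (Fin d), ∀ x, f (x ∘ σ) = f x := by
      intro σ x
      have h1 : (x ∘ σ = T) = (x = T) := propext (by rw [hT]; exact hconst x σ true)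
      have h2 : (x ∘ σ = B) = (x = B) := propext (by rw [hB]; exact hconst x σ false)
      rw [hf]; dsimp only; simp only [h1, h2]
    have hmargin : ∀ i : Fin d,
        ∑ x ∈ univ.filter (fun x : Fin d → Bool => x i = true), f x = p := by
      intro i
      rw [Finset.sum_eq_single_of_mem T (by simp [hT]), hfT]
      intro x hx hxT
      simp only [mem_filter, mem_univ, true_and] at hx
      refine hfo x hxT fun hxB => ?_
      rw [hxB] at hx; simp [hB] at hx
    have hexch : IsExchBernoulli d p f := ⟨hnn, hsum, hperm, hmargin⟩
    refine ⟨f, hexch, ?_, ?_, ?_⟩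
    · -- probDefaults 0 = 1 - p
      rw [probDefaults]
      rw [Finset.sum_eq_single_of_mem B (by simp [hB]), hfB]
      intro x hx hxB
      simp only [mem_filter, mem_univ, true_and, Finset.card_eq_zero] at hx
      have hx' : ∀ l, x l = false := by
        intro l
        by_contra hc
        have hmem : l ∈ univ.filter fun l => x l = true := by
          simp only [mem_filter, mem_univ, true_and]
          simpa using hc
        rw [hx] at hmem
        exact absurd hmem (Finset.notMem_empty l)
      exact absurd (show x = B from funext hx') hxB
    · -- probDefaults d = p
      rw [probDefaults]
      rw [Finset.sum_eq_single_of_mem T ?_, hfT]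
      · intro x hx hxT
        simp only [mem_filter, mem_univ, true_and] at hx
        have : (univ.filter fun l => x l = true) = univ := by
          apply Finset.eq_univ_of_card
          rw [hx, Fintype.card_fin]
        refine absurd (funext fun l => ?_) hxT
        have := Finset.eq_univ_iff_forall.mp this l
        simpa [hT] using (Finset.mem_filter.mp this).2
      · simp only [mem_filter, mem_univ, true_and, hT]
        simp [Fintype.card_fin]
    · intro i j hij
      rw [crossMoment]
      rw [Finset.sum_eq_single_of_mem T (by simp [hT]), hfT]
      intro x hx hxT
      simp only [mem_filter, mem_univ, true_and] at hx
      refine hfo x hxT fun hxB => ?_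
      rw [hxB] at hx; simp [hB] at hx
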